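/- If g : ℝ^N \ {0} → ℝ⁺ is admissible (i.e. ∬_{B×B} g(y-x) dy dx < ∞ where B is the unit ball), then there exists a constant C such that ∬_{B_r × B_r} g(y-x) dy dx ≤ C r^N for every 0 < r ≤ 1. -/

import Mathlib

open MeasureTheory Set Metric

/-- The Riesz interaction ℜ(F,G) = ∫_F ∫_G g(y-x) dy dx. -/
noncomputable def interaction (N : ℕ) (g : EuclideanSpace ℝ (Fin N) → ℝ)
    (F G : Set (EuclideanSpace ℝ (Fin N))) : ℝ :=
  ∫ x in F, ∫ y in G, g (y - x)

theorem interaction_ball_le (N : ℕ) (g : EuclideanSpace ℝ (Fin N) → ℝ)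
    (hg_pos : ∀ x ≠ 0, 0 ≤ g x)
    (hadm : IntegrableOn
      (fun p : EuclideanSpace ℝ (Fin N) × EuclideanSpace ℝ (Fin N) => g (p.2 - p.1))
      ((ball (0 : EuclideanSpace ℝ (Fin N)) 1) ×ˢ (ball (0 : EuclideanSpace ℝ (Fin N)) 1))
      volume) :
    ∃ C : ℝ, ∀ r : ℝ, 0 < r → r ≤ 1 →
      interaction N g (ball (0 : EuclideanSpace ℝ (Fin N)) r)
          (ball (0 : EuclideanSpace ℝ (Fin N)) r) ≤ C * r ^ N := by
  rcases Nat.eq_zero_or_pos N with hN | hN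
  · -- trivial case N = 0
    subst hN
    refine ⟨interaction 0 g (ball 0 1) (ball 0 1), fun r hr hr1 => ?_⟩
    have hball : ∀ s : ℝ, 0 < s → ball (0 : EuclideanSpace ℝ (Fin 0)) s = univ := by
      intro s hs
      ext x
      have hx : x = 0 := Subsingleton.elim x 0
      simp [hx, mem_ball, hs]
    rw [hball r hr, hball 1 one_pos]
    simp
  -- main case
  haveI : Nonempty (Fin N) := ⟨⟨0, hN⟩⟩
  set B1 : Set (EuclideanSpace ℝ (Fin N)) := ball 0 1 with hB1
  -- a.e. nonnegativity of translates of g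
  have hae : ∀ c : EuclideanSpace ℝ (Fin N), ∀ᵐ y : EuclideanSpace ℝ (Fin N) ∂volume,
      0 ≤ g (y - c) := by
    intro c
    have h0 : ∀ᵐ y : EuclideanSpace ℝ (Fin N) ∂volume, y ≠ c := by
      rw [ae_iff]
      simp [measure_singleton]
    filter_upwards [h0] with y hy
    exact hg_pos _ (sub_ne_zero.2 hy)
  -- integrability on products of subballs
  have hprod : ∀ s t : Set (EuclideanSpace ℝ (Fin N)), s ⊆ B1 → t ⊆ B1 →
      Integrable (fun p : EuclideanSpace ℝ (Fin N) × EuclideanSpace ℝ (Fin N) => g (p.2 - p.1))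
        ((volume.restrict s).prod (volume.restrict t)) := by
    intro s t hs ht
    rw [Measure.prod_restrict, ← Measure.volume_eq_prod]
    exact hadm.mono_set (Set.prod_mono hs ht)
  -- slice integrability a.e.
  have hsl : ∀ᵐ x ∂volume.restrict B1,
      IntegrableOn (fun y => g (y - x)) B1 volume :=
    (hprod B1 B1 le_rfl le_rfl).prod_right_ae
  -- pick x0 in the half ball with integrable slice
  have hhalf : (ball (0:EuclideanSpace ℝ (Fin N)) (1/2)) ⊆ B1 := ball_subset_ball (by norm_num)
  haveI : (ae (volume.restrict (ball (0:EuclideanSpace ℝ (Fin N)) (1/2)))).NeBot := by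
    refine ae_neBot.2 fun h => ?_
    exact (measure_ball_pos volume (0:EuclideanSpace ℝ (Fin N)) (by norm_num)).ne'
      (Measure.restrict_eq_zero.mp h)
  have hsl2 : ∀ᵐ x ∂volume.restrict (ball (0:EuclideanSpace ℝ (Fin N)) (1/2)),
      IntegrableOn (fun y => g (y - x)) B1 volume :=
    ae_mono (Measure.restrict_mono hhalf le_rfl) hsl
  obtain ⟨x0, hx0mem, hx0int⟩ :=
    ((ae_restrict_mem measurableSet_ball).and hsl2).exists
  set A : ℝ := ∫ y in B1, g (y - x0) with hA
  have hA0 : 0 ≤ A := integral_nonneg_of_ae (ae_restrict_of_ae (hae x0))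
  -- inner integral function
  have hH_int : ∀ s t : Set (EuclideanSpace ℝ (Fin N)), s ⊆ B1 → t ⊆ B1 →
      IntegrableOn (fun x => ∫ y in t, g (y - x)) s volume := by
    intro s t hs ht
    exact (hprod s t hs ht).integral_prod_left
  have hH1_nonneg : ∀ x : EuclideanSpace ℝ (Fin N), 0 ≤ ∫ y in B1, g (y - x) := fun x =>
    integral_nonneg_of_ae (ae_restrict_of_ae (hae x))
  set I1 : ℝ := interaction N g B1 B1 with hI1def
  have hI1 : 0 ≤ I1 :=
    integral_nonneg_of_ae (ae_restrict_of_ae (Filter.Eventually.of_forall hH1_nonneg))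
  -- key bound for small r
  have hkey : ∀ r : ℝ, 0 < r → r ≤ 1/4 → ∀ x ∈ ball (0:EuclideanSpace ℝ (Fin N)) r,
      (∫ y in ball (0:EuclideanSpace ℝ (Fin N)) r, g (y - x)) ≤ A := by
    intro r hr hr4 x hx
    set c : EuclideanSpace ℝ (Fin N) := x - x0 with hc
    have hmp : MeasurePreserving (· + c) (volume : Measure (EuclideanSpace ℝ (Fin N))) volume :=
      measurePreserving_add_right volume c
    have hemb : MeasurableEmbedding (· + c) :=
      (MeasurableEquiv.addRight c).measurableEmbedding
    have hpre : (· + c) ⁻¹' (ball (0:EuclideanSpace ℝ (Fin N)) r) = ball (x0 - x) r := by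
      ext z
      simp only [mem_preimage, mem_ball, dist_eq_norm]
      have h : z + c - 0 = z - (x0 - x) := by rw [hc]; abel
      rw [h]
    have h1 : (∫ y in ball (0:EuclideanSpace ℝ (Fin N)) r, g (y - x))
        = ∫ z in ball (x0 - x) r, g (z - x0) := by
      rw [← hmp.setIntegral_preimage_emb hemb (fun y => g (y - x)) (ball 0 r), hpre]
      refine setIntegral_congr_fun measurableSet_ball fun z _ => ?_
      congr 1
      rw [hc]; abel
    rw [h1]
    refine setIntegral_mono_set hx0int (ae_restrict_of_ae (hae x0))
      (HasSubset.Subset.eventuallyLE ?_)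
    refine ball_subset_ball' ?_
    have h2 : dist (x0 - x) 0 ≤ ‖x0‖ + ‖x‖ := by
      rw [dist_eq_norm, sub_zero]
      exact norm_sub_le _ _
    have hx0n : ‖x0‖ < 1/2 := by simpa [mem_ball, dist_eq_norm] using hx0mem
    have hxn : ‖x‖ < r := by simpa [mem_ball, dist_eq_norm] using hx
    nlinarith
  -- volume of balls
  have hvol : ∀ r : ℝ, 0 < r → (volume (ball (0:EuclideanSpace ℝ (Fin N)) r)).toReal
      = r ^ N * (volume B1).toReal := by
    intro r hr
    rw [hB1, Measure.addHaar_ball volume (0:EuclideanSpace ℝ (Fin N)) hr.le, ENNReal.toReal_mul,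
      ENNReal.toReal_ofReal (by positivity), finrank_euclideanSpace_fin]
  set C : ℝ := max ((volume B1).toReal * A) ((4:ℝ) ^ N * I1) with hC
  refine ⟨C, fun r hr hr1 => ?_⟩
  rcases le_or_gt r (1/4) with hsmall | hbig
  · -- small r
    have hsub : ball (0:EuclideanSpace ℝ (Fin N)) r ⊆ B1 := ball_subset_ball hr1
    have hmono : interaction N g (ball 0 r) (ball 0 r)
        ≤ A * (volume (ball (0:EuclideanSpace ℝ (Fin N)) r)).toReal := by
      have h := setIntegral_mono_on (hH_int _ _ hsub hsub)
        (integrableOn_const measure_ball_lt_top.ne)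
        measurableSet_ball (hkey r hr hsmall)
      simpa [interaction, setIntegral_const, smul_eq_mul, mul_comm, Measure.real] using h
    calc interaction N g (ball 0 r) (ball 0 r)
        ≤ A * (volume (ball (0:EuclideanSpace ℝ (Fin N)) r)).toReal := hmono
      _ = (volume B1).toReal * A * r ^ N := by rw [hvol r hr]; ring
      _ ≤ C * r ^ N :=
          mul_le_mul_of_nonneg_right (le_max_left _ _) (by positivity)
  · -- large r
    have hsub : ball (0:EuclideanSpace ℝ (Fin N)) r ⊆ B1 := ball_subset_ball hr1
    have hmono1 : interaction N g (ball 0 r) (ball 0 r)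
        ≤ ∫ x in ball (0:EuclideanSpace ℝ (Fin N)) r, ∫ y in B1, g (y - x) := by
      refine integral_mono_ae (hH_int _ _ hsub hsub) (hH_int _ _ hsub le_rfl) ?_
      filter_upwards [ae_mono (Measure.restrict_mono hsub le_rfl) hsl] with x hx
      exact setIntegral_mono_set hx (ae_restrict_of_ae (hae x))
        (HasSubset.Subset.eventuallyLE hsub)
    have hmono2 : (∫ x in ball (0:EuclideanSpace ℝ (Fin N)) r, ∫ y in B1, g (y - x)) ≤ I1 :=
      setIntegral_mono_set (hH_int _ _ le_rfl le_rfl)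
        (ae_restrict_of_ae (Filter.Eventually.of_forall hH1_nonneg))
        (HasSubset.Subset.eventuallyLE hsub)
    calc interaction N g (ball 0 r) (ball 0 r) ≤ I1 := hmono1.trans hmono2
      _ ≤ (4 ^ N * I1) * r ^ N := by
          nlinarith [pow_nonneg hr.le N, pow_nonneg (show (0:ℝ) ≤ 4 by norm_num) N,
            one_le_pow₀ (show (1:ℝ) ≤ 4 * r by nlinarith) (n := N),
            mul_pow (4:ℝ) r N]
      _ ≤ C * r ^ N := mul_le_mul_of_nonneg_right (le_max_right _ _) (by positivity)
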